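/- Let L be the hyperbolic difference operator with coefficients a, b, c and Laplace invariants k, h, and let ψ : ℤ × ℤ → ℂ satisfy Lψ = 0 (i.e. (Lψ)(n,m) = 0 for all n,m). (i) If h is nowhere vanishing, then for all (n,m): ψ(n,m) = −(a(n,m)·b(n,m−1)·h(n,m))⁻¹ · (φ(n,m+1) + a(n,m)φ(n,m)), where φ(n,m) = ψ(n+1,m) + b(n,m−1)ψ(n,m). (ii) If k is nowhere vanishing, then for all (n,m): ψ(n,m) = −(a(n−1,m)·b(n,m)·k(n,m))⁻¹ · (χ(n+1,m) + b(n,m)χ(n,m)), where χ(n,m) = ψ(n,m+1) + a(n−1,m)ψ(n,m). (In other words, the discrete Laplace transformations are inverted, on kernels, by the stated operators.) -/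

import Mathlib

noncomputable section

/-- The hyperbolic difference operator with coefficients `a`, `b`, `c`:
`(Lψ)(n,m) = ψ(n+1,m+1) + a(n,m)ψ(n+1,m) + b(n,m)ψ(n,m+1) + c(n,m)ψ(n,m)`. -/
def Lop (a b c : ℤ → ℤ → ℂ) (ψ : ℤ → ℤ → ℂ) : ℤ → ℤ → ℂ :=
  fun n m => ψ (n + 1) (m + 1) + a n m * ψ (n + 1) m + b n m * ψ n (m + 1) + c n m * ψ n m

/-- The Laplace invariant `k(n,m) = c(n,m)/(a(n-1,m)b(n,m)) - 1`. -/
def kInv (a b c : ℤ → ℤ → ℂ) : ℤ → ℤ → ℂ :=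
  fun n m => c n m / (a (n - 1) m * b n m) - 1

/-- The Laplace invariant `h(n,m) = c(n,m)/(a(n,m)b(n,m-1)) - 1`. -/
def hInv (a b c : ℤ → ℤ → ℂ) : ℤ → ℤ → ℂ :=
  fun n m => c n m / (a n m * b n (m - 1)) - 1

/-- The operator `(Dψ)(n,m) = ψ(n+1,m) + b(n,m-1)ψ(n,m)`. -/
def Dop (b : ℤ → ℤ → ℂ) (ψ : ℤ → ℤ → ℂ) : ℤ → ℤ → ℂ :=
  fun n m => ψ (n + 1) m + b n (m - 1) * ψ n m

/-- `L̂` (coefficients `a' b' c'`) is a Laplace transform of `L` (coefficients `a b c`). -/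
def IsLaplaceTransform (a' b' c' a b c : ℤ → ℤ → ℂ) : Prop :=
  ∃ q : ℤ → ℤ → ℂ, ∀ ψ : ℤ → ℤ → ℂ, ∀ n m : ℤ,
    Lop a' b' c' (Dop b ψ) n m = Lop a b c ψ (n + 1) m + q n m * Lop a b c ψ n m

/-- on the kernel of `L`, the discrete Laplace transformations are inverted
by the stated operators. -/
theorem stmt2 (a b c : ℤ → ℤ → ℂ)
    (ha : ∀ n m, a n m ≠ 0) (hb : ∀ n m, b n m ≠ 0)
    (ψ : ℤ → ℤ → ℂ) (hψ : ∀ n m, Lop a b c ψ n m = 0) :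
    ((∀ n m, hInv a b c n m ≠ 0) → ∀ n m : ℤ,
      ψ n m = -(a n m * b n (m - 1) * hInv a b c n m)⁻¹ *
        (Dop b ψ n (m + 1) + a n m * Dop b ψ n m)) ∧
    ((∀ n m, kInv a b c n m ≠ 0) → ∀ n m : ℤ,
      ψ n m = -(a (n - 1) m * b n m * kInv a b c n m)⁻¹ *
        ((fun n' m' => ψ n' (m' + 1) + a (n' - 1) m' * ψ n' m') (n + 1) m
          + b n m * (fun n' m' => ψ n' (m' + 1) + a (n' - 1) m' * ψ n' m') n m)) := by
  constructor
  · intro hh n m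
    have key := hψ n m
    have hH := hh n m
    simp only [Lop] at key
    simp only [Dop, hInv, add_sub_cancel_right] at hH ⊢
    have h1 := ha n m
    have h2 := hb n (m-1)
    field_simp at hH ⊢
    rw [neg_div', eq_div_iff (div_ne_zero_iff.mp hH).1]
    linear_combination key
  · intro hk n m
    have key := hψ n m
    have hK := hk n m
    simp only [Lop] at key
    simp only [kInv, add_sub_cancel_right] at hK ⊢
    have h1 := ha (n-1) m
    have h2 := hb n m
    field_simp at hK ⊢
    rw [neg_div', eq_div_iff (div_ne_zero_iff.mp hK).1]
    linear_combination key
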